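/- For every $\alpha\in(0,1]$, the function $f_\alpha(t)=\frac{(t+2)^\alpha}{2(t+1)}\left(\frac{t}{t+1}\right)^t$ is strictly decreasing for real $t>0$. -/

import Mathlib

open Real

/-- for `α ∈ (0,1]`, the function
`f_α(t) = (t+2)^α / (2(t+1)) * (t/(t+1))^t` is strictly decreasing on `(0,∞)`. -/
theorem f_alpha_strictAnti (α : ℝ) (hα0 : 0 < α) (hα1 : α ≤ 1) :
    StrictAntiOn
      (fun t : ℝ => (t + 2) ^ α / (2 * (t + 1)) * (t / (t + 1)) ^ t)
      (Set.Ioi (0 : ℝ)) := by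
  set g : ℝ → ℝ := fun t =>
    α * Real.log (t + 2) - Real.log 2 - Real.log (t + 1)
      + t * (Real.log t - Real.log (t + 1)) with hg
  have key : StrictAntiOn g (Set.Ioi 0) := by
    apply strictAntiOn_of_deriv_neg (convex_Ioi 0)
    · apply ContinuousOn.add
      · apply ContinuousOn.sub
        · apply ContinuousOn.sub
          · exact (continuousOn_const.mul ((continuous_id.add continuous_const).continuousOn.log
              (fun t ht => by have : (0:ℝ) < t := ht; simp only [Pi.add_apply, id]; nlinarith)))
          · exact continuousOn_const
        · exact (continuous_id.add continuous_const).continuousOn.log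
            (fun t ht => by have : (0:ℝ) < t := ht; simp only [Pi.add_apply, id]; nlinarith)
      · exact continuous_id.continuousOn.mul
          ((continuous_id.continuousOn.log (fun t ht => ne_of_gt ht)).sub
            ((continuous_id.add continuous_const).continuousOn.log
              (fun t ht => by have : (0:ℝ) < t := ht; simp only [Pi.add_apply, id]; nlinarith)))
    · intro t ht
      rw [interior_Ioi] at ht
      have ht0 : (0:ℝ) < t := ht
      have ht1 : (0:ℝ) < t + 1 := by linarith
      have ht2 : (0:ℝ) < t + 2 := by linarith
      have h1 : HasDerivAt (fun t : ℝ => Real.log (t + 2)) (1 / (t + 2)) t := by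
        simpa using ((hasDerivAt_id t).add_const 2).log (ne_of_gt ht2)
      have h2 : HasDerivAt (fun t : ℝ => Real.log (t + 1)) (1 / (t + 1)) t := by
        simpa using ((hasDerivAt_id t).add_const 1).log (ne_of_gt ht1)
      have h3 : HasDerivAt (fun t : ℝ => Real.log t) t⁻¹ t :=
        Real.hasDerivAt_log (ne_of_gt ht0)
      have hd : HasDerivAt g
          (α * (1 / (t + 2)) - 1 / (t + 1)
            + (1 * (Real.log t - Real.log (t + 1)) + t * (t⁻¹ - 1 / (t + 1)))) t := by
        simpa [g, Pi.add_def, Pi.sub_def, Pi.mul_def, id_eq] using (((h1.const_mul α).sub_const (Real.log 2)).sub h2).add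
          ((hasDerivAt_id t).mul (h3.sub h2))
      rw [hd.deriv]
      have hne : t / (t + 1) ≠ 1 := by
        intro h
        have := (div_eq_one_iff_eq (ne_of_gt ht1)).mp h
        linarith
      have hlog : Real.log t - Real.log (t + 1) < -(1 / (t + 1)) := by
        have := Real.log_lt_sub_one_of_pos (div_pos ht0 ht1) hne
        rw [Real.log_div (ne_of_gt ht0) (ne_of_gt ht1)] at this
        have h' : t / (t + 1) - 1 = -(1 / (t + 1)) := by field_simp; ring
        linarith [h' ▸ this]
      have hα : α * (1 / (t + 2)) ≤ 1 / (t + 2) := by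
        nlinarith [one_div_pos.mpr ht2]
      have hmul : t * (t⁻¹ - 1 / (t + 1)) = 1 / (t + 1) := by
        field_simp
        ring
      have hlt : 1 / (t + 2) < 1 / (t + 1) := by
        apply one_div_lt_one_div_of_lt ht1; linarith
      nlinarith [hlog, hα, hmul, hlt]
  intro x hx y hy hxy
  have hrepr : ∀ t ∈ Set.Ioi (0:ℝ),
      (t + 2) ^ α / (2 * (t + 1)) * (t / (t + 1)) ^ t = Real.exp (g t) := by
    intro t ht
    have ht0 : (0:ℝ) < t := ht
    have ht1 : (0:ℝ) < t + 1 := by linarith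
    have ht2 : (0:ℝ) < t + 2 := by linarith
    have e1 : (t + 2) ^ α = Real.exp (α * Real.log (t + 2)) := by
      rw [Real.rpow_def_of_pos ht2, mul_comm]
    have e2 : (2 : ℝ) * (t + 1) = Real.exp (Real.log 2 + Real.log (t + 1)) := by
      rw [Real.exp_add, Real.exp_log (by norm_num), Real.exp_log ht1]
    have e3 : (t / (t + 1)) ^ t
        = Real.exp (t * (Real.log t - Real.log (t + 1))) := by
      rw [Real.rpow_def_of_pos (div_pos ht0 ht1), mul_comm,
        Real.log_div (ne_of_gt ht0) (ne_of_gt ht1)]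
    rw [e1, e2, e3, ← Real.exp_sub, ← Real.exp_add, hg]
    ring_nf
  simp only
  rw [hrepr x hx, hrepr y hy]
  exact Real.exp_lt_exp.mpr (key hx hy hxy)
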